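/- Let k ≥ 2 be an integer, let A be a k-primitive set of integers greater than 1, and let T be a finite subset of A with |𝒫(T)| = n. If n = k + 1, then |T| ≤ n + 1. -/

import Mathlib

open scoped BigOperators ENNReal

/-- `primesOf A` is the set `𝒫(A)` of primes dividing some member of `A`. -/
def primesOf (A : Set ℕ) : Set ℕ := {p : ℕ | p.Prime ∧ ∃ n ∈ A, p ∣ n}

/-- A set of integers greater than 1 is *primitive* if no element divides another. -/
def Primitive (A : Set ℕ) : Prop :=
  (∀ n ∈ A, 1 < n) ∧ ∀ a ∈ A, ∀ b ∈ A, a ≠ b → ¬a ∣ b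

/-- A set `A` of integers greater than 1 with `|A| ≥ k + 1` is *k-primitive* if no element
divides the product of `k` distinct other elements of `A`. -/
def KPrimitive (k : ℕ) (A : Set ℕ) : Prop :=
  (∀ n ∈ A, 1 < n) ∧ (k : ℕ∞) + 1 ≤ A.encard ∧
    ∀ a ∈ A, ∀ B : Finset ℕ, ↑B ⊆ A \ {a} → B.card = k → ¬a ∣ ∏ b ∈ B, b

/-- If every prime valuation of `a` is bounded by the total valuation in `B`, and `a`'s
primes all lie in `P`, then `a` divides the product of `B`, contradicting k-primitivity. -/
lemma key_div (k : ℕ) (A : Set ℕ) (hA : KPrimitive k A) (T : Finset ℕ) (hTA : ↑T ⊆ A)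
    (P : Finset ℕ) (hP : ∀ t ∈ T, ∀ p : ℕ, p.Prime → p ∣ t → p ∈ P)
    (a : ℕ) (ha : a ∈ T) (B : Finset ℕ) (hB : B ⊆ T.erase a) (hBk : B.card = k)
    (hdvd : ∀ p ∈ P, a.factorization p ≤ ∑ b ∈ B, b.factorization p) : False := by
  have hpos : ∀ t ∈ T, t ≠ 0 := fun t ht => by
    have := hA.1 t (hTA ht); omega
  have hBne : ∀ b ∈ B, b ≠ 0 := fun b hb => hpos b (Finset.mem_of_mem_erase (hB hb))
  have hprodne : (∏ b ∈ B, b) ≠ 0 := Finset.prod_ne_zero_iff.mpr hBne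
  have hdiv : a ∣ ∏ b ∈ B, b := by
    rw [← Nat.factorization_le_iff_dvd (hpos a ha) hprodne]
    intro p
    rw [Nat.factorization_prod hBne, Finset.sum_apply']
    by_cases hp : p ∈ P
    · exact hdvd p hp
    · have : a.factorization p = 0 := by
        rw [Nat.factorization_eq_zero_iff]
        by_contra h
        push_neg at h
        exact hp (hP a ha p h.1 h.2.1)
      simp [this]
  exact hA.2.2 a (hTA ha) B
    (fun b hb => ⟨hTA (Finset.mem_of_mem_erase (hB hb)),
      Finset.ne_of_mem_erase (hB hb)⟩) hBk hdiv

/-- If `a` is nowhere dominant and some `b0 ≠ a` matches `a` in at least two primes of `P`,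
then we can build a `k`-set whose product `a` divides: contradiction. -/
lemma cover_lemma (k : ℕ) (hk : 2 ≤ k) (A : Set ℕ) (hA : KPrimitive k A)
    (T : Finset ℕ) (hTA : ↑T ⊆ A)
    (P : Finset ℕ) (hP : ∀ t ∈ T, ∀ p : ℕ, p.Prime → p ∣ t → p ∈ P)
    (hPcard : P.card = k + 1) (hT : k + 1 ≤ T.card)
    (a : ℕ) (ha : a ∈ T)
    (hnd : ∀ p ∈ P, ∃ b, b ∈ T ∧ b ≠ a ∧ a.factorization p ≤ b.factorization p)
    (b0 : ℕ) (hb0T : b0 ∈ T) (hb0a : b0 ≠ a)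
    (h2 : 2 ≤ (P.filter fun p => a.factorization p ≤ b0.factorization p).card) :
    False := by
  classical
  set w : ℕ → ℕ := fun p =>
    if hp : p ∈ P then
      (if a.factorization p ≤ b0.factorization p then b0 else (hnd p hp).choose)
    else b0 with hw
  have hwspec : ∀ p ∈ P, w p ∈ T ∧ w p ≠ a ∧ a.factorization p ≤ (w p).factorization p := by
    intro p hp
    simp only [hw, dif_pos hp]
    by_cases hc : a.factorization p ≤ b0.factorization p
    · rw [if_pos hc]; exact ⟨hb0T, hb0a, hc⟩
    · rw [if_neg hc]; exact (hnd p hp).choose_spec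
  set S := P.image w with hS
  have hSsub : S ⊆ T.erase a := by
    intro b hb
    rw [hS, Finset.mem_image] at hb
    obtain ⟨p, hp, rfl⟩ := hb
    exact Finset.mem_erase.mpr ⟨(hwspec p hp).2.1, (hwspec p hp).1⟩
  have hScard : S.card ≤ k := by
    have hsub : S ⊆ insert b0 ((P.filter fun p => ¬(a.factorization p ≤ b0.factorization p)).image w) := by
      intro b hb
      rw [hS, Finset.mem_image] at hb
      obtain ⟨p, hp, rfl⟩ := hb
      by_cases hc : a.factorization p ≤ b0.factorization p
      · simp only [hw, dif_pos hp, if_pos hc]; exact Finset.mem_insert_self _ _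
      · exact Finset.mem_insert_of_mem (Finset.mem_image.mpr ⟨p, Finset.mem_filter.mpr ⟨hp, hc⟩, rfl⟩)
    have c1 := Finset.card_le_card hsub
    have c2 := Finset.card_insert_le b0
      ((P.filter fun p => ¬(a.factorization p ≤ b0.factorization p)).image w)
    have c3 : ((P.filter fun p => ¬(a.factorization p ≤ b0.factorization p)).image w).card
        ≤ (P.filter fun p => ¬(a.factorization p ≤ b0.factorization p)).card :=
      Finset.card_image_le
    have c4 := Finset.card_filter_add_card_filter_not
      (s := P) (p := fun p => a.factorization p ≤ b0.factorization p)
    omega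
  have herase : k ≤ (T.erase a).card := by
    rw [Finset.card_erase_of_mem ha]; omega
  obtain ⟨B, hSB, hBsub, hBcard⟩ := Finset.exists_subsuperset_card_eq hSsub hScard herase
  refine key_div k A hA T hTA P hP a ha B hBsub hBcard (fun p hp => ?_)
  calc a.factorization p ≤ (w p).factorization p := (hwspec p hp).2.2
    _ ≤ ∑ b ∈ B, b.factorization p :=
      Finset.single_le_sum (f := fun b => b.factorization p) (fun _ _ => Nat.zero_le _)
        (hSB (Finset.mem_image_of_mem w hp))

/-- If `A` is `k`-primitive (`k ≥ 2`) and `T ⊆ A` is finite with `|𝒫(T)| = n = k + 1`,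
then `|T| ≤ n + 1`. -/
theorem card_le_succ_of_primesOf_card_eq_succ (k : ℕ) (hk : 2 ≤ k) (A : Set ℕ)
    (hA : KPrimitive k A) (T : Finset ℕ) (hTA : ↑T ⊆ A)
    (n : ℕ) (hn : (primesOf ↑T).ncard = n) (hnk : n = k + 1) :
    T.card ≤ n + 1 := by
  classical
  by_contra hcon
  push_neg at hcon
  have hTcard : k + 3 ≤ T.card := by omega
  -- primesOf T is finite
  have hfin : (primesOf (↑T : Set ℕ)).Finite := by
    by_contra h
    rw [Set.Infinite.ncard h] at hn
    omega
  set P := hfin.toFinset with hPdef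
  have hPcard : P.card = k + 1 := by
    rw [hPdef, ← Set.ncard_eq_toFinset_card _ hfin, hn, hnk]
  have hP : ∀ t ∈ T, ∀ p : ℕ, p.Prime → p ∣ t → p ∈ P := by
    intro t ht p hp hdvd
    rw [hPdef, Set.Finite.mem_toFinset]
    exact ⟨hp, t, ht, hdvd⟩
  -- dominant elements
  set D := T.filter (fun a => ∃ p ∈ P, ∀ b ∈ T, b ≠ a → b.factorization p < a.factorization p)
    with hD
  have hDcard : D.card ≤ k + 1 := by
    rw [← hPcard]
    set f : ℕ → ℕ := fun a =>
      if h : ∃ p ∈ P, ∀ b ∈ T, b ≠ a → b.factorization p < a.factorization p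
      then h.choose else 0 with hf
    apply Finset.card_le_card_of_injOn f
    · intro a haD
      rw [hD, Finset.mem_coe, Finset.mem_filter] at haD
      simp only [hf, dif_pos haD.2]
      exact haD.2.choose_spec.1
    · intro a1 h1 a2 h2 hfeq
      simp only [Finset.coe_filter, Set.mem_setOf_eq, hD, Finset.mem_coe, Finset.mem_filter] at h1 h2
      by_contra hne
      simp only [hf, dif_pos h1.2, dif_pos h2.2] at hfeq
      have s1 := h1.2.choose_spec.2
      have s2 := h2.2.choose_spec.2
      rw [hfeq] at s1
      have l1 := s1 a2 h2.1 (Ne.symm hne)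
      have l2 := s2 a1 h1.1 hne
      omega
  -- two nowhere-dominant elements
  have h2card : 1 < (T \ D).card := by
    have hsub : D ⊆ T := Finset.filter_subset _ T
    have e0 := Finset.card_sdiff_add_card_eq_card hsub
    omega
  obtain ⟨a, haTD, a', ha'TD, hne⟩ := Finset.one_lt_card.mp h2card
  have hnd : ∀ c ∈ T \ D, ∀ p ∈ P, ∃ b, b ∈ T ∧ b ≠ c ∧
      c.factorization p ≤ b.factorization p := by
    intro c hc p hp
    rw [Finset.mem_sdiff, hD, Finset.mem_filter] at hc
    have : ¬∃ p ∈ P, ∀ b ∈ T, b ≠ c → b.factorization p < c.factorization p :=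
      fun h => hc.2 ⟨hc.1, h⟩
    push_neg at this
    obtain ⟨b, hb, hbc, hble⟩ := this p hp
    exact ⟨b, hb, hbc, hble⟩
  -- each other element matches in at most one prime
  have hcov : ∀ c ∈ T \ D, ∀ b ∈ T, b ≠ c →
      (P.filter fun p => c.factorization p ≤ b.factorization p).card ≤ 1 := by
    intro c hc b hb hbc
    by_contra h
    push_neg at h
    exact cover_lemma k hk A hA T hTA P hP hPcard (by omega)
      c (Finset.mem_sdiff.mp hc).1 (hnd c hc) b hb hbc h
  -- final count
  have haT : a ∈ T := (Finset.mem_sdiff.mp haTD).1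
  have ha'T : a' ∈ T := (Finset.mem_sdiff.mp ha'TD).1
  have h1 := hcov a haTD a' ha'T (Ne.symm hne)
  have h2 := hcov a' ha'TD a haT hne
  have e1 := Finset.card_filter_add_card_filter_not
    (s := P) (p := fun p => a.factorization p ≤ a'.factorization p)
  have e2 := Finset.card_filter_add_card_filter_not
    (s := P) (p := fun p => a'.factorization p ≤ a.factorization p)
  -- the two "neg" filters are disjoint subsets of P
  have hdisj : Disjoint (P.filter fun p => ¬(a.factorization p ≤ a'.factorization p))
      (P.filter fun p => ¬(a'.factorization p ≤ a.factorization p)) := by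
    rw [Finset.disjoint_left]
    intro p hp1 hp2
    rw [Finset.mem_filter] at hp1 hp2
    omega
  have := Finset.card_le_card (Finset.union_subset
    (Finset.filter_subset (fun p => ¬(a.factorization p ≤ a'.factorization p)) P)
    (Finset.filter_subset (fun p => ¬(a'.factorization p ≤ a.factorization p)) P))
  rw [Finset.card_union_of_disjoint hdisj] at this
  omega
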